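/- (Mirror image lemma.) There exists ε₀* > 0 depending only on v, d, τ, γ such that for all 0 < ε₀ ≤ ε₀* the following holds. Suppose c_I, c_J ∈ Q₀ are distinct points with ‖c_I − c_J‖₁ = s₀ := inf{‖x − y‖₁ : x ≠ y ∈ Q₀} and s₀ ≤ 10|log ε₀|². Then for every c ∈ Q₀ there is exactly one sign σ ∈ {+1, −1} such that the point c̃ = c + σ(c_J − c_I) satisfies ‖2θ* + (c + c̃)·ω‖ ≤ 6δ₀^{1/2}. -/

import Mathlib

open scoped InnerProductSpace

/-- `‖t‖`: the distance from a real number `t` to the nearest integer. -/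
noncomputable def distToInt (t : ℝ) : ℝ := |t - round t|

/-- The ℓ¹ norm `‖x‖₁ = Σᵢ |xᵢ|` on `ℤ^d`. -/
def nrm1 {d : ℕ} (x : Fin d → ℤ) : ℤ := ∑ i, |x i|

/-- The dot product `x·ω` for `x ∈ ℤ^d`, `ω ∈ ℝ^d`. -/
noncomputable def dotw {d : ℕ} (x : Fin d → ℤ) (ω : Fin d → ℝ) : ℝ := ∑ i, (x i : ℝ) * ω i

/-- The ℓ¹ norm on `ℝ^d`. -/
noncomputable def nrm1R {d : ℕ} (x : Fin d → ℝ) : ℝ := ∑ i, |x i|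

/-- The dot product on `ℝ^d`. -/
noncomputable def dotwR {d : ℕ} (x ω : Fin d → ℝ) : ℝ := ∑ i, x i * ω i

/-- The standing hypotheses on the `C²`-cosine like potential `v` with parameter `a`:
`v` is `C²`, even and `1`-periodic, `0` is a nondegenerate maximum, `1/2` is a nondegenerate
minimum, these are the only critical points modulo `1`, `|v''| > 3` near `0` and `1/2`
(within distance `a`), and `|v'| > 3` away from `0` and `1/2`. -/
structure CosLike (v : ℝ → ℝ) (a : ℝ) : Prop where
  smooth : ContDiff ℝ 2 v
  even : ∀ θ, v (-θ) = v θ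
  periodic : ∀ θ, v (θ + 1) = v θ
  a_pos : 0 < a
  a_lt : a < 1 / 10
  critMax : deriv v 0 = 0
  critMax' : deriv (deriv v) 0 < 0
  critMin : deriv v (1 / 2) = 0
  critMin' : 0 < deriv (deriv v) (1 / 2)
  onlyCrit : ∀ θ ∈ Set.Ico (0 : ℝ) 1, deriv v θ = 0 → θ = 0 ∨ θ = 1 / 2
  deriv2_big : ∀ θ, (distToInt θ < a ∨ distToInt (θ - 1 / 2) < a) → 3 < |deriv (deriv v) θ|
  deriv_big : ∀ θ, a ≤ distToInt θ → a ≤ distToInt (θ - 1 / 2) → 3 < |deriv v θ|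

/-- `M₁ = sup_θ max(|v(θ)|, |v'(θ)|, |v''(θ)|)`. -/
noncomputable def M1 (v : ℝ → ℝ) : ℝ :=
  ⨆ θ : ℝ, max |v θ| (max |deriv v θ| |deriv (deriv v) θ|)

/-- The finite-volume Schrödinger operator `H_Λ(θ) = ε Δ + v(θ + x·ω) δ_{x,y}` as a matrix
indexed by a finite set `Λ ⊂ ℤ^d`. -/
noncomputable def Hmat {d : ℕ} (ε : ℝ) (v : ℝ → ℝ) (ω : Fin d → ℝ) (θ : ℝ)
    (Λ : Finset (Fin d → ℤ)) : Matrix Λ Λ ℝ :=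
  Matrix.of fun x y =>
    if nrm1 (x.1 - y.1) = 1 then ε
    else if x = y then v (θ + dotw x.1 ω) else 0

/-- The discrete ℓ¹-ball `{x ∈ ℤ^d : ‖x − c‖₁ ≤ r}` as a `Finset`. -/
noncomputable def ball1 {d : ℕ} (c : Fin d → ℤ) (r : ℝ) : Finset (Fin d → ℤ) :=
  (Finset.Icc (fun i => c i - ⌈r⌉) (fun i => c i + ⌈r⌉)).filter
    fun x => ((nrm1 (x - c) : ℤ) : ℝ) ≤ r

/-- The discrete ℓ¹-ball around a (possibly non-integer) center `c ∈ ℝ^d`. -/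
noncomputable def ballR {d : ℕ} (c : Fin d → ℝ) (r : ℝ) : Finset (Fin d → ℤ) :=
  (Finset.Icc (fun i => ⌊c i - r⌋ - 1) (fun i => ⌈c i + r⌉ + 1)).filter
    fun x => nrm1R (fun i => (x i : ℝ) - c i) ≤ r

/-- The nearest neighbours of `x` in `ℤ^d`. -/
noncomputable def nbrs {d : ℕ} (x : Fin d → ℤ) : Finset (Fin d → ℤ) :=
  (Finset.Icc (fun i => x i - 1) (fun i => x i + 1)).filter fun y => nrm1 (y - x) = 1

/-- `δ₀ = ε₀^{1/20}`. -/
noncomputable def delta0 (ε₀ : ℝ) : ℝ := ε₀ ^ ((1 : ℝ) / 20)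

namespace S6

lemma dti_nonneg (t : ℝ) : 0 ≤ distToInt t := abs_nonneg _

lemma dti_le (t : ℝ) (n : ℤ) : distToInt t ≤ |t - n| := by
  rcases eq_or_ne (round t) n with h | h
  · simp [distToInt, h]
  · have h1 : |t - round t| ≤ 1 / 2 := abs_sub_round t
    have h2 : (1 : ℝ) ≤ |(round t : ℝ) - n| := by
      have : round t - n ≠ 0 := sub_ne_zero.mpr h
      have := Int.one_le_abs this
      calc (1:ℝ) ≤ ((|round t - n| : ℤ) : ℝ) := by exact_mod_cast this
        _ = |(round t : ℝ) - n| := by push_cast; rfl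
    have h3 : |(round t : ℝ) - n| ≤ |(round t:ℝ) - t| + |t - n| := abs_sub_le _ _ _
    have h4 : |(round t:ℝ) - t| = |t - round t| := abs_sub_comm _ _
    unfold distToInt
    linarith
lemma dti_le_abs (t : ℝ) : distToInt t ≤ |t| := by simpa using dti_le t 0

lemma dti_add_int (t : ℝ) (n : ℤ) : distToInt (t + n) = distToInt t := by
  apply le_antisymm
  · have := dti_le (t + n) (round t + n)
    simpa [add_sub_add_right_eq_sub, distToInt] using (this.trans_eq (by push_cast; ring_nf))
  · have := dti_le t (round (t + (n:ℝ)) - n)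
    refine this.trans_eq ?_
    push_cast
    congr 1
    ring

lemma dti_neg (t : ℝ) : distToInt (-t) = distToInt t := by
  have h1 : ∀ s : ℝ, distToInt (-s) ≤ distToInt s := by
    intro s
    calc distToInt (-s) ≤ |(-s) - ((-round s : ℤ) : ℝ)| := dti_le _ _
      _ = |s - (round s : ℝ)| := by
          push_cast
          rw [show -s - -(round s:ℝ) = -(s - round s) by ring, abs_neg]
      _ = distToInt s := rfl
  refine le_antisymm (h1 t) ?_
  simpa using h1 (-t)

lemma dti_add_le (x y : ℝ) : distToInt (x + y) ≤ distToInt x + distToInt y := by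
  have := dti_le (x + y) (round x + round y)
  refine this.trans ?_
  push_cast
  calc |x + y - ((round x : ℝ) + round y)| = |(x - round x) + (y - round y)| := by ring_nf
    _ ≤ |x - round x| + |y - round y| := abs_add_le _ _

lemma dti_sub_le (x y : ℝ) : distToInt (x - y) ≤ distToInt x + distToInt y := by
  rw [sub_eq_add_neg]
  simpa [dti_neg] using dti_add_le x (-y)

lemma dti_le_half (t : ℝ) : distToInt t ≤ 1/2 := abs_sub_round t

lemma dti_eq_self {x : ℝ} (h0 : 0 ≤ x) (h2 : x ≤ 1/2) : distToInt x = x := by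
  rcases lt_or_eq_of_le h2 with h | h
  · have : round x = 0 := by
      rw [round_eq]
      have : x + 1/2 < 1 := by linarith
      simp [Int.floor_eq_zero_iff, Set.mem_Ico]
      constructor <;> [linarith; linarith]
    simp [distToInt, this, abs_of_nonneg h0]
  · subst h
    norm_num [distToInt, round_eq]

section
variable {v : ℝ → ℝ}

lemma v_sub_int (hper : ∀ θ, v (θ + 1) = v θ) (t : ℝ) (n : ℤ) : v (t - n) = v t := by
  have hp : Function.Periodic v 1 := hper
  have := hp.sub_int_mul_eq (x := t) n
  simpa using this

lemma v_dti (hev : ∀ θ, v (-θ) = v θ) (hper : ∀ θ, v (θ + 1) = v θ) (t : ℝ) :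
    v (distToInt t) = v t := by
  have h1 : v (distToInt t) = v (t - round t) := by
    rcases abs_cases (t - round t) with ⟨h, _⟩ | ⟨h, _⟩
    · rw [distToInt, h]
    · rw [distToInt, h, hev]
  rw [h1, v_sub_int hper]

lemma mirror (θ₁ θ₂ : ℝ) :
    distToInt (θ₁ - θ₂) ≤ |distToInt θ₁ - distToInt θ₂| ∨
    distToInt (θ₁ + θ₂) ≤ |distToInt θ₁ - distToInt θ₂| := by
  set u₁ := θ₁ - round θ₁ with hu₁
  set u₂ := θ₂ - round θ₂ with hu₂
  have e₁ : distToInt (θ₁ - θ₂) = distToInt (u₁ - u₂) := by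
    have : θ₁ - θ₂ = (u₁ - u₂) + ((round θ₁ - round θ₂ : ℤ) : ℝ) := by push_cast; ring
    rw [this, dti_add_int]
  have e₂ : distToInt (θ₁ + θ₂) = distToInt (u₁ + u₂) := by
    have : θ₁ + θ₂ = (u₁ + u₂) + ((round θ₁ + round θ₂ : ℤ) : ℝ) := by push_cast; ring
    rw [this, dti_add_int]
  have r₁ : distToInt θ₁ = |u₁| := rfl
  have r₂ : distToInt θ₂ = |u₂| := rfl
  rw [e₁, e₂, r₁, r₂]
  rcases abs_cases u₁ with ⟨h1, _⟩ | ⟨h1, _⟩ <;> rcases abs_cases u₂ with ⟨h2, _⟩ | ⟨h2, _⟩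
  · left; calc distToInt (u₁ - u₂) ≤ |u₁ - u₂| := dti_le_abs _
      _ = |(|u₁| - |u₂|)| := by rw [h1, h2]
  · right; calc distToInt (u₁ + u₂) ≤ |u₁ + u₂| := dti_le_abs _
      _ = |(|u₁| - |u₂|)| := by rw [h1, h2]; ring_nf
  · right; calc distToInt (u₁ + u₂) ≤ |u₁ + u₂| := dti_le_abs _
      _ = |(|u₁| - |u₂|)| := by rw [h1, h2, show u₁ + u₂ = -(-u₁ - u₂) by ring, abs_neg]
  · left; calc distToInt (u₁ - u₂) ≤ |u₁ - u₂| := dti_le_abs _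
      _ = |(|u₁| - |u₂|)| := by rw [h1, h2, show u₁ - u₂ = -(-u₁ - -u₂) by ring, abs_neg]

end

section
variable {v : ℝ → ℝ} {a : ℝ}

lemma hdiffv (hv : CosLike v a) : Differentiable ℝ v := hv.smooth.differentiable (by norm_num)

lemma hcd1 (hv : CosLike v a) : ContDiff ℝ 1 (deriv v) := by
  have h : ContDiff ℝ ((1:ℕ) + 1) v := by exact_mod_cast hv.smooth
  exact (contDiff_succ_iff_deriv.mp h).2.2

lemma hdiff1 (hv : CosLike v a) : Differentiable ℝ (deriv v) :=
  (hcd1 hv).differentiable (by norm_num)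

lemma hcont2 (hv : CosLike v a) : Continuous (deriv (deriv v)) :=
  (hcd1 hv).continuous_deriv le_rfl

lemma f2_neg (hv : CosLike v a) : ∀ x, 0 ≤ x → x < a → deriv (deriv v) x < -3 := by
  intro x h0 hx
  have habs := hv.deriv2_big x (Or.inl ((dti_le_abs x).trans_lt (by rwa [abs_of_nonneg h0])))
  rcases lt_abs.mp habs with h | h
  · exfalso
    have h0' : deriv (deriv v) 0 < 0 := hv.critMax'
    obtain ⟨z, hz, hz0⟩ := intermediate_value_Icc h0 (hcont2 hv).continuousOn
      (show (0:ℝ) ∈ Set.Icc (deriv (deriv v) 0) (deriv (deriv v) x) from ⟨le_of_lt h0', by linarith⟩)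
    have : 3 < |deriv (deriv v) z| := hv.deriv2_big z (Or.inl
      ((dti_le_abs z).trans_lt (by rw [abs_of_nonneg hz.1]; linarith [hz.2])))
    rw [hz0] at this; norm_num at this
  · linarith

lemma f2_pos (hv : CosLike v a) : ∀ x, 1/2 - a < x → x ≤ 1/2 → 3 < deriv (deriv v) x := by
  intro x hx h2
  have hreg : distToInt (x - 1/2) < a :=
    (dti_le_abs _).trans_lt (by rw [abs_of_nonpos (by linarith)]; linarith)
  have habs := hv.deriv2_big x (Or.inr hreg)
  rcases lt_abs.mp habs with h | h
  · exact h
  · exfalso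
    have h0' : 0 < deriv (deriv v) (1/2) := hv.critMin'
    obtain ⟨z, hz, hz0⟩ := intermediate_value_Icc h2 (hcont2 hv).continuousOn
      (show (0:ℝ) ∈ Set.Icc (deriv (deriv v) x) (deriv (deriv v) (1/2)) from ⟨by linarith, le_of_lt h0'⟩)
    have : 3 < |deriv (deriv v) z| := hv.deriv2_big z (Or.inr
      ((dti_le_abs _).trans_lt (by rw [abs_of_nonpos (by linarith [hz.2])]; linarith [hz.1])))
    rw [hz0] at this; norm_num at this

lemma f1_near0 (hv : CosLike v a) : ∀ x, 0 < x → x < a → deriv v x < -3 * x := by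
  intro x h0 hx
  obtain ⟨ξ, hξ, hslope⟩ := exists_deriv_eq_slope (deriv v) h0
    (hdiff1 hv).continuous.continuousOn ((hdiff1 hv).differentiableOn)
  rw [hv.critMax, sub_zero, sub_zero] at hslope
  have hd2 : deriv (deriv v) ξ < -3 := f2_neg hv ξ hξ.1.le (by linarith [hξ.2])
  rw [hslope] at hd2
  calc deriv v x = (deriv v x / x) * x := by field_simp
    _ < -3 * x := by apply mul_lt_mul_of_pos_right hd2 h0

lemma f1_nearhalf (hv : CosLike v a) : ∀ x, 1/2 - a < x → x < 1/2 → deriv v x < -3 * (1/2 - x) := by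
  intro x hx h2
  obtain ⟨ξ, hξ, hslope⟩ := exists_deriv_eq_slope (deriv v) h2
    (hdiff1 hv).continuous.continuousOn ((hdiff1 hv).differentiableOn)
  rw [hv.critMin] at hslope
  have hd2 : 3 < deriv (deriv v) ξ := f2_pos hv ξ (by linarith [hξ.1]) (by linarith [hξ.2])
  rw [hslope] at hd2
  have hpos : 0 < 1/2 - x := by linarith
  have := (lt_div_iff₀ hpos).mp hd2
  linarith

lemma f1_a_neg (hv : CosLike v a) : deriv v a < 0 := by
  obtain ⟨ξ, hξ, hslope⟩ := exists_deriv_eq_slope (deriv v) hv.a_pos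
    (hdiff1 hv).continuous.continuousOn ((hdiff1 hv).differentiableOn)
  rw [hv.critMax, sub_zero, sub_zero] at hslope
  have hd2 : deriv (deriv v) ξ < -3 := f2_neg hv ξ hξ.1.le hξ.2
  rw [hslope] at hd2
  have := (div_lt_iff₀ hv.a_pos).mp hd2
  nlinarith [hv.a_pos]

lemma f1_mid (hv : CosLike v a) : ∀ x, a ≤ x → x ≤ 1/2 - a → deriv v x < -3 := by
  have ha := hv.a_pos
  intro x hx h2
  have hd1 : distToInt x = x := dti_eq_self (by linarith) (by linarith)
  have hd2 : distToInt (x - 1/2) = 1/2 - x := by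
    rw [show x - 1/2 = -(1/2 - x) by ring, dti_neg]
    exact dti_eq_self (by linarith) (by linarith)
  have habs := hv.deriv_big x (by rw [hd1]; exact hx) (by rw [hd2]; linarith)
  rcases lt_abs.mp habs with h | h
  · exfalso
    obtain ⟨z, hz, hz0⟩ := intermediate_value_Icc hx (hdiff1 hv).continuous.continuousOn
      (show (0:ℝ) ∈ Set.Icc (deriv v a) (deriv v x) from ⟨(f1_a_neg hv).le, by linarith⟩)
    have hz1 : distToInt z = z := dti_eq_self (by linarith [hz.1]) (by linarith [hz.2])
    have hz2 : distToInt (z - 1/2) = 1/2 - z := by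
      rw [show z - 1/2 = -(1/2 - z) by ring, dti_neg]
      exact dti_eq_self (by linarith [hz.2]) (by linarith [hz.1])
    have : 3 < |deriv v z| := hv.deriv_big z (by rw [hz1]; linarith [hz.1])
      (by rw [hz2]; linarith [hz.2])
    rw [hz0] at this; norm_num at this
  · linarith
end
section
variable {v : ℝ → ℝ} {a : ℝ}

lemma L1 (hv : CosLike v a) {x y : ℝ} (h0 : 0 ≤ x) (hxy : x ≤ y) (hy : y ≤ a) :
    3/2 * (y^2 - x^2) ≤ v x - v y := by
  set g : ℝ → ℝ := fun t => v t + 3/2 * t^2 with hg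
  have hder : ∀ t : ℝ, HasDerivAt g (deriv v t + 3/2 * (2 * t)) t := by
    intro t
    have h1 := (hdiffv hv t).hasDerivAt
    have h2 : HasDerivAt (fun s : ℝ => 3/2 * s^2) (3/2 * (2 * t)) t := by
      simpa using (hasDerivAt_pow 2 t).const_mul (3/2 : ℝ)
    exact h1.add h2
  have hanti : AntitoneOn g (Set.Icc 0 a) := by
    apply antitoneOn_of_deriv_nonpos (convex_Icc 0 a)
    · exact fun t _ => ((hder t).continuousAt).continuousWithinAt
    · intro t ht
      exact ((hder t).differentiableAt).differentiableWithinAt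
    · intro t ht
      rw [interior_Icc] at ht
      rw [(hder t).deriv]
      have := f1_near0 hv t ht.1 ht.2
      linarith
  have := hanti ⟨h0, hxy.trans hy⟩ ⟨h0.trans hxy, hy⟩ hxy
  simp only [hg] at this
  linarith

lemma L2 (hv : CosLike v a) {x y : ℝ} (h0 : a ≤ x) (hxy : x ≤ y) (hy : y ≤ 1/2 - a) :
    3 * (y - x) ≤ v x - v y := by
  set g : ℝ → ℝ := fun t => v t + 3 * t with hg
  have hder : ∀ t : ℝ, HasDerivAt g (deriv v t + 3) t := by
    intro t
    have := (hdiffv hv t).hasDerivAt.add ((hasDerivAt_id t).const_mul (3:ℝ))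
    simp at this
    exact this
  have hanti : AntitoneOn g (Set.Icc a (1/2 - a)) := by
    apply antitoneOn_of_deriv_nonpos (convex_Icc _ _)
    · exact fun t _ => ((hder t).continuousAt).continuousWithinAt
    · exact fun t _ => ((hder t).differentiableAt).differentiableWithinAt
    · intro t ht
      rw [interior_Icc] at ht
      rw [(hder t).deriv]
      have := f1_mid hv t ht.1.le ht.2.le
      linarith
  have := hanti ⟨h0, hxy.trans hy⟩ ⟨h0.trans hxy, hy⟩ hxy
  simp only [hg] at this
  linarith

lemma L3 (hv : CosLike v a) {x y : ℝ} (h0 : 1/2 - a ≤ x) (hxy : x ≤ y) (hy : y ≤ 1/2) :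
    3/2 * ((1/2 - x)^2 - (1/2 - y)^2) ≤ v x - v y := by
  set g : ℝ → ℝ := fun t => v t - 3/2 * (1/2 - t)^2 with hg
  have hder : ∀ t : ℝ, HasDerivAt g (deriv v t + 3 * (1/2 - t)) t := by
    intro t
    have h2 : HasDerivAt (fun s : ℝ => 3/2 * (1/2 - s)^2) (-3 * (1/2 - t)) t := by
      have hs : HasDerivAt (fun s : ℝ => 1/2 - s) (-1) t := by
        simpa using (hasDerivAt_id t).const_sub (1/2 : ℝ)
      have := (hs.pow 2).const_mul (3/2 : ℝ)
      exact this.congr_deriv (by ring)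
    have := (hdiffv hv t).hasDerivAt.sub h2
    exact this.congr_deriv (by ring)
  have hanti : AntitoneOn g (Set.Icc (1/2 - a) (1/2)) := by
    apply antitoneOn_of_deriv_nonpos (convex_Icc _ _)
    · exact fun t _ => ((hder t).continuousAt).continuousWithinAt
    · exact fun t _ => ((hder t).differentiableAt).differentiableWithinAt
    · intro t ht
      rw [interior_Icc] at ht
      rw [(hder t).deriv]
      have := f1_nearhalf hv t ht.1 ht.2
      linarith
  have := hanti ⟨h0, hxy.trans hy⟩ ⟨h0.trans hxy, hy⟩ hxy
  simp only [hg] at this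
  linarith

lemma frg {p q t : ℝ} (hp : 0 ≤ p) (hq : 0 ≤ q) (ht0 : 0 < t) (ht10 : t ≤ 1/10)
    (hsum : 2*t < p + q) (hbound : 3/2*p^2 + 3*q < 2*t^2) : False := by
  have hq' : q < (2/3)*t^2 := by nlinarith [sq_nonneg p]
  have hp' : 2*t - (2/3)*t^2 < p := by linarith
  have h19 : (19/10)*t ≤ 2*t - (2/3)*t^2 := by nlinarith
  have hp19 : (19/10)*t < p := by linarith
  have : ((19/10)*t)^2 < p^2 := by
    have h0 : 0 < (19/10)*t := by linarith
    nlinarith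
  nlinarith [sq_nonneg t]

set_option maxHeartbeats 1000000 in
lemma core (hv : CosLike v a) {δ : ℝ} (hδ0 : 0 < δ) (hδ : δ ≤ 1/100) {x y : ℝ}
    (hx : 0 ≤ x) (hxy : x ≤ y) (hy : y ≤ 1/2) (hvv : |v x - v y| < 2 * δ) :
    y - x ≤ 2 * Real.sqrt δ := by
  by_contra hcon
  push_neg at hcon
  set t := Real.sqrt δ with ht
  have ht0 : 0 < t := Real.sqrt_pos.mpr hδ0
  have htδ : t^2 = δ := Real.sq_sqrt hδ0.le
  have ht10 : t ≤ 1/10 := by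
    rw [ht, show (1:ℝ)/10 = Real.sqrt (1/100) by
      rw [show (1:ℝ)/100 = (1/10)^2 by norm_num, Real.sqrt_sq (by norm_num)]]
    exact Real.sqrt_le_sqrt hδ
  have ht2 : t^2 ≤ 1/100 := by rw [htδ]; exact hδ
  have hD : v x - v y < 2 * t^2 := by rw [htδ]; exact (abs_lt.mp hvv).2
  have ha := hv.a_pos
  have ha' := hv.a_lt
  have hyx0 : 0 ≤ y - x := by linarith
  have e2 : 4*t^2 < (y-x)^2 := by
    nlinarith [mul_pos (sub_pos.mpr hcon) (show (0:ℝ) < y - x + 2*t by linarith)]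
  rcases le_or_gt y a with hc1 | hc1
  · -- both in [0, a]
    have h1 := L1 hv hx hxy hc1
    have hid : y^2 - x^2 = (y-x)^2 + 2*x*(y-x) := by ring
    have hprod : 0 ≤ 2*x*(y-x) := mul_nonneg (by linarith) (by linarith)
    linarith
  rcases le_or_gt (1/2 - a) x with hc2 | hc2
  · -- both in [1/2 - a, 1/2]
    have h1 := L3 hv hc2 hxy hy
    have hid : (1/2-x)^2 - (1/2-y)^2 = (y-x)^2 + 2*(1/2-y)*(y-x) := by ring
    have hprod : 0 ≤ 2*(1/2-y)*(y-x) := mul_nonneg (by linarith) (by linarith)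
    linarith
  rcases le_or_gt a x with hx1 | hx1
  · rcases le_or_gt y (1/2 - a) with hy1 | hy1
    · -- both mid
      have h1 := L2 hv hx1 hxy hy1
      nlinarith
    · -- x in mid, y near 1/2 : case 5
      have h1 := L2 hv hx1 (by linarith : x ≤ 1/2 - a) le_rfl
      have h2 := L3 hv le_rfl (by linarith : 1/2 - a ≤ y) hy
      have hid : (1/2 - (1/2 - a))^2 - (1/2-y)^2
          = (y - (1/2 - a))^2 + 2*(1/2-y)*(y-(1/2-a)) := by ring
      have hprod : 0 ≤ 2*(1/2-y)*(y-(1/2-a)) :=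
        mul_nonneg (by linarith) (by linarith)
      exact frg (show (0:ℝ) ≤ y - (1/2-a) by linarith) (show (0:ℝ) ≤ (1/2-a) - x by linarith)
        ht0 ht10 (by linarith) (by linarith)
  · rcases le_or_gt y (1/2 - a) with hy1 | hy1
    · -- x near 0, a < y ≤ 1/2 - a : case 4a
      have h1 := L1 hv hx (le_of_lt hx1) le_rfl
      have h2 := L2 hv le_rfl (by linarith : a ≤ y) hy1
      have hid : a^2 - x^2 = (a - x)^2 + 2*x*(a-x) := by ring
      have hprod : 0 ≤ 2*x*(a-x) := mul_nonneg (by linarith) (by linarith)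
      exact frg (show (0:ℝ) ≤ a - x by linarith) (show (0:ℝ) ≤ y - a by linarith)
        ht0 ht10 (by linarith) (by linarith)
    · -- x < a and y > 1/2 - a : case 4b, long interval
      have h1 := L1 hv hx (le_of_lt hx1) le_rfl
      have h2 := L2 hv le_rfl (by linarith : a ≤ 1/2 - a) le_rfl
      have h3 := L3 hv le_rfl (by linarith : 1/2 - a ≤ y) hy
      have e1 : x^2 ≤ a^2 := pow_le_pow_left₀ hx (le_of_lt hx1) 2
      have e2 : (1/2 - y)^2 ≤ (1/2 - (1/2-a))^2 :=
        pow_le_pow_left₀ (by linarith) (by linarith) 2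
      linarith [ht2]
end
section
variable {v : ℝ → ℝ} {a : ℝ} {d : ℕ}

lemma key (hv : CosLike v a) {δ : ℝ} (hδ0 : 0 < δ) (hδ : δ ≤ 1/100) (θ₁ θ₂ : ℝ)
    (h : |v θ₁ - v θ₂| < 2 * δ) :
    distToInt (θ₁ - θ₂) ≤ 2 * Real.sqrt δ ∨ distToInt (θ₁ + θ₂) ≤ 2 * Real.sqrt δ := by
  have hv1 : v (distToInt θ₁) = v θ₁ := v_dti hv.even hv.periodic θ₁
  have hv2 : v (distToInt θ₂) = v θ₂ := v_dti hv.even hv.periodic θ₂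
  have hcore : |distToInt θ₁ - distToInt θ₂| ≤ 2 * Real.sqrt δ := by
    rcases le_total (distToInt θ₁) (distToInt θ₂) with hle | hle
    · have := core hv hδ0 hδ (dti_nonneg θ₁) hle (dti_le_half θ₂) (by rw [hv1, hv2]; exact h)
      rw [abs_sub_comm, abs_of_nonneg (by linarith)]
      exact this
    · have := core hv hδ0 hδ (dti_nonneg θ₂) hle (dti_le_half θ₁)
        (by rw [hv1, hv2, abs_sub_comm]; exact h)
      rw [abs_of_nonneg (by linarith)]
      exact this
  rcases mirror θ₁ θ₂ with h' | h'
  · exact Or.inl (h'.trans hcore)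
  · exact Or.inr (h'.trans hcore)

lemma dotw_add (x y : Fin d → ℤ) (ω : Fin d → ℝ) :
    dotw (x + y) ω = dotw x ω + dotw y ω := by
  simp only [dotw, Pi.add_apply, Int.cast_add, add_mul, Finset.sum_add_distrib]

lemma dotw_sub (x y : Fin d → ℤ) (ω : Fin d → ℝ) :
    dotw (x - y) ω = dotw x ω - dotw y ω := by
  simp only [dotw, Pi.sub_apply, Int.cast_sub, sub_mul, Finset.sum_sub_distrib]

lemma dotw_smul (n : ℤ) (x : Fin d → ℤ) (ω : Fin d → ℝ) :
    dotw (n • x) ω = (n : ℝ) * dotw x ω := by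
  simp only [dotw, Pi.smul_apply, smul_eq_mul, Int.cast_mul, Finset.mul_sum, mul_assoc]

lemma nrm1_pos {x : Fin d → ℤ} (hx : x ≠ 0) : 1 ≤ nrm1 x := by
  obtain ⟨i, hi⟩ := Function.ne_iff.mp hx
  calc (1:ℤ) ≤ |x i| := Int.one_le_abs (by simpa using hi)
    _ ≤ ∑ j, |x j| := Finset.single_le_sum (f := fun j => |x j|) (fun j _ => abs_nonneg _) (Finset.mem_univ i)

lemma nrm1_neg (x : Fin d → ℤ) : nrm1 (-x) = nrm1 x := by
  simp [nrm1]

lemma nrm1_two_smul (x : Fin d → ℤ) : nrm1 ((2:ℤ) • x) = 2 * nrm1 x := by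
  simp only [nrm1, Pi.smul_apply, smul_eq_mul, abs_mul, Finset.mul_sum]
  norm_num

lemma exists_eps (τ γ : ℝ) (hτ : 0 < τ) (hγ : 0 < γ) :
    ∃ E : ℝ, 0 < E ∧ ∀ ε : ℝ, 0 < ε → ε ≤ E →
      ε ≤ (1/100)^(20:ℕ) ∧ 12 * (20 * (Real.log ε)^2)^τ * ε^((1:ℝ)/40) < γ := by
  have h1 : Filter.Tendsto
      (fun y : ℝ => 12 * (20:ℝ)^τ * (y ^ (2*τ) * Real.exp (-(1/40)*y)))
      Filter.atTop (nhds 0) := by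
    have := (tendsto_rpow_mul_exp_neg_mul_atTop_nhds_zero (2*τ) (1/40) (by norm_num)).const_mul
      (12 * (20:ℝ)^τ)
    simpa using this
  have h2 : Filter.Tendsto (fun ε : ℝ => -Real.log ε) (nhdsWithin 0 (Set.Ioi 0))
      Filter.atTop := Filter.tendsto_neg_atBot_atTop.comp Real.tendsto_log_nhdsGT_zero
  have h3 : Filter.Tendsto (fun ε : ℝ => 12 * (20 * (Real.log ε)^2)^τ * ε^((1:ℝ)/40))
      (nhdsWithin 0 (Set.Ioi 0)) (nhds 0) := by
    refine (h1.comp h2).congr' ?_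
    filter_upwards [self_mem_nhdsWithin, Filter.eventually_mem_set.mpr
      (nhdsWithin_le_nhds (eventually_lt_nhds (show (0:ℝ) < 1 by norm_num)))] with ε hε hε1
    have hε0 : (0:ℝ) < ε := hε
    have hlog : Real.log ε < 0 := Real.log_neg hε0 hε1
    have e1 : Real.exp (-(1/40) * (-Real.log ε)) = ε ^ ((1:ℝ)/40) := by
      rw [Real.rpow_def_of_pos hε0]
      ring_nf
    have e2 : (-Real.log ε) ^ (2*τ) = (20 * (Real.log ε)^2)^τ / (20:ℝ)^τ := by
      rw [Real.mul_rpow (by norm_num) (sq_nonneg _)]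
      rw [show ((Real.log ε)^2 : ℝ) = (-Real.log ε)^(2:ℕ) by ring]
      rw [← Real.rpow_natCast (-Real.log ε) 2, ← Real.rpow_mul (by linarith)]
      push_cast
      field_simp
    simp only [Function.comp]
    rw [e1, e2]
    have h20 : (0:ℝ) < (20:ℝ)^τ := Real.rpow_pos_of_pos (by norm_num) τ
    field_simp
  have hlt : ∀ᶠ ε in nhdsWithin 0 (Set.Ioi 0),
      12 * (20 * (Real.log ε)^2)^τ * ε^((1:ℝ)/40) < γ := h3.eventually_lt_const hγ
  have hsm : ∀ᶠ ε in nhdsWithin 0 (Set.Ioi (0:ℝ)), ε ≤ (1/100)^(20:ℕ) :=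
    nhdsWithin_le_nhds (eventually_le_nhds (by positivity))
  obtain ⟨u, hu, hsub⟩ := mem_nhdsGT_iff_exists_Ioc_subset.mp (hlt.and hsm)
  exact ⟨u, hu, fun ε h0 hE => ⟨(hsub ⟨h0, hE⟩).2, (hsub ⟨h0, hE⟩).1⟩⟩

end

end S6


/-- Mirror image lemma: if `c_I, c_J ∈ Q₀` are distinct points realizing
`s₀ = inf{‖x − y‖₁ : x ≠ y ∈ Q₀}` and `s₀ ≤ 10|log ε₀|²`, then every `c ∈ Q₀` has exactly one
sign `s ∈ {+1, −1}` such that `c̃ = c + s(c_J − c_I)` satisfies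
`‖2θ* + (c + c̃)·ω‖ ≤ 6δ₀^{1/2}`. -/
theorem statement6 (v : ℝ → ℝ) (a : ℝ) (hv : CosLike v a) (d : ℕ) (τ γ : ℝ)
    (hτ : (d : ℝ) < τ) (hγ : 0 < γ) :
    ∃ ε₀star > (0 : ℝ), ∀ ε₀ : ℝ, 0 < ε₀ → ε₀ ≤ ε₀star →
      ∀ ω : Fin d → ℝ, (∀ i, ω i ∈ Set.Icc (0 : ℝ) 1) →
      (∀ x : Fin d → ℤ, x ≠ 0 → γ / (nrm1 x : ℝ) ^ τ ≤ distToInt (dotw x ω)) →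
      ∀ θs Es : ℝ, ∀ cI cJ : Fin d → ℤ, cI ≠ cJ →
        |v (θs + dotw cI ω) - Es| < delta0 ε₀ →
        |v (θs + dotw cJ ω) - Es| < delta0 ε₀ →
        -- `‖c_I − c_J‖₁` realizes the infimum `s₀`
        (∀ x y : Fin d → ℤ, x ≠ y → |v (θs + dotw x ω) - Es| < delta0 ε₀ →
          |v (θs + dotw y ω) - Es| < delta0 ε₀ → nrm1 (cI - cJ) ≤ nrm1 (x - y)) →
        -- `s₀ ≤ 10|log ε₀|²`
        (nrm1 (cI - cJ) : ℝ) ≤ 10 * |Real.log ε₀| ^ 2 →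
      ∀ c : Fin d → ℤ, |v (θs + dotw c ω) - Es| < delta0 ε₀ →
        ∃! s : ℤ, (s = 1 ∨ s = -1) ∧
          distToInt (2 * θs + dotw (c + (c + s • (cJ - cI))) ω)
            ≤ 6 * delta0 ε₀ ^ ((1 : ℝ) / 2) := by
  have hτ0 : (0:ℝ) < τ := lt_of_le_of_lt (Nat.cast_nonneg d) hτ
  obtain ⟨E, hE0, hE⟩ := S6.exists_eps τ γ hτ0 hγ
  refine ⟨E, hE0, ?_⟩
  intro ε₀ hε0 hεE ω hω hDC θs Es cI cJ hne hvI hvJ _hmin hs10 c hvc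
  obtain ⟨hεsm, hK⟩ := hE ε₀ hε0 hεE
  have hδ0 : 0 < delta0 ε₀ := Real.rpow_pos_of_pos hε0 _
  have hδsm : delta0 ε₀ ≤ 1/100 := by
    have h1 := Real.rpow_le_rpow hε0.le hεsm (by norm_num : (0:ℝ) ≤ 1/20)
    rw [← Real.rpow_natCast ((1:ℝ)/100) 20, ← Real.rpow_mul (by norm_num)] at h1
    norm_num at h1
    exact h1
  set t := Real.sqrt (delta0 ε₀) with htdef
  have ht0 : 0 < t := Real.sqrt_pos.mpr hδ0
  have h6t : 6 * delta0 ε₀ ^ ((1:ℝ)/2) = 6 * t := by rw [htdef, Real.sqrt_eq_rpow]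
  have htε : t = ε₀ ^ ((1:ℝ)/40) := by
    rw [htdef, Real.sqrt_eq_rpow, delta0, ← Real.rpow_mul hε0.le]
    norm_num
  have hcIJ : cI - cJ ≠ 0 := sub_ne_zero.mpr hne
  have hs1 : (1:ℝ) ≤ (nrm1 (cI - cJ) : ℝ) := by exact_mod_cast S6.nrm1_pos hcIJ
  have hsS : (nrm1 (cI - cJ) : ℝ) ≤ 10 * (Real.log ε₀)^2 := by rwa [← sq_abs]
  have hlogsq : (0:ℝ) ≤ (Real.log ε₀)^2 := sq_nonneg _
  have hKt : 12 * (20 * (Real.log ε₀)^2)^τ * t < γ := by rw [htε]; exact hK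
  have hmono : ∀ m : ℝ, 0 < m → m ≤ 20 * (Real.log ε₀)^2 → 12 * t * m^τ < γ := by
    intro m hm hmle
    have h1 : m^τ ≤ (20*(Real.log ε₀)^2)^τ := Real.rpow_le_rpow hm.le hmle hτ0.le
    have h3 := mul_le_mul_of_nonneg_left h1 (by linarith : (0:ℝ) ≤ 12 * t)
    linarith
  have hdc1 : γ / ((nrm1 (cI - cJ) : ℝ))^τ ≤ distToInt (dotw (cI - cJ) ω) := hDC _ hcIJ
  have hdc1' : 2 * t < γ / ((nrm1 (cI - cJ) : ℝ))^τ := by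
    rw [lt_div_iff₀ (Real.rpow_pos_of_pos (by linarith) τ)]
    have h := hmono (nrm1 (cI - cJ) : ℝ) (by linarith) (by linarith)
    nlinarith [mul_pos ht0 (Real.rpow_pos_of_pos (show (0:ℝ) < (nrm1 (cI - cJ):ℝ) by linarith) τ)]
  have h2cJI : (2:ℤ) • (cJ - cI) ≠ 0 := by
    intro h
    apply hcIJ
    have h2 : cJ - cI = 0 := by
      have := smul_eq_zero.mp h
      rcases this with h' | h'
      · norm_num at h'
      · exact h'
    rw [show cI - cJ = -(cJ - cI) by ring, h2, neg_zero]
  have hnrm2 : (nrm1 ((2:ℤ) • (cJ - cI)) : ℝ) = 2 * (nrm1 (cI - cJ) : ℝ) := by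
    rw [S6.nrm1_two_smul, show cJ - cI = -(cI - cJ) by ring, S6.nrm1_neg]
    push_cast
    ring
  have hdc2 : γ / ((nrm1 ((2:ℤ) • (cJ - cI)) : ℝ))^τ ≤ distToInt (dotw ((2:ℤ) • (cJ - cI)) ω) :=
    hDC _ h2cJI
  have hdc2' : 12 * t < γ / ((nrm1 ((2:ℤ) • (cJ - cI)) : ℝ))^τ := by
    rw [hnrm2, lt_div_iff₀ (Real.rpow_pos_of_pos (by linarith) τ)]
    have h := hmono (2 * (nrm1 (cI - cJ):ℝ)) (by linarith) (by linarith)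
    linarith
  set A := θs + dotw cI ω with hA
  set B := θs + dotw cJ ω with hB
  set C := θs + dotw c ω with hC
  have hvAB : |v A - v B| < 2 * delta0 ε₀ := by
    calc |v A - v B| ≤ |v A - Es| + |Es - v B| := abs_sub_le _ _ _
      _ < delta0 ε₀ + delta0 ε₀ := by rw [abs_sub_comm Es]; exact add_lt_add hvI hvJ
      _ = 2 * delta0 ε₀ := by ring
  have hvCA : |v C - v A| < 2 * delta0 ε₀ := by
    calc |v C - v A| ≤ |v C - Es| + |Es - v A| := abs_sub_le _ _ _
      _ < delta0 ε₀ + delta0 ε₀ := by rw [abs_sub_comm Es]; exact add_lt_add hvc hvI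
      _ = 2 * delta0 ε₀ := by ring
  have hAB : distToInt (A + B) ≤ 2 * t := by
    rcases S6.key hv hδ0 hδsm A B hvAB with h | h
    · exfalso
      have he : A - B = dotw (cI - cJ) ω := by rw [hA, hB, S6.dotw_sub]; ring
      rw [he] at h
      linarith
    · exact h
  have hT : ∀ s : ℤ, 2*θs + dotw (c + (c + s • (cJ - cI))) ω
      = 2*θs + dotw c ω + dotw c ω + (s:ℝ) * (dotw cJ ω - dotw cI ω) := by
    intro s
    rw [S6.dotw_add, S6.dotw_add, S6.dotw_smul, S6.dotw_sub]
    ring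
  have hnotboth : ¬ (distToInt (2*θs + dotw (c + (c + (1:ℤ) • (cJ - cI))) ω) ≤ 6*t ∧
      distToInt (2*θs + dotw (c + (c + (-1:ℤ) • (cJ - cI))) ω) ≤ 6*t) := by
    rintro ⟨u1, u2⟩
    have hdiffT : (2*θs + dotw (c + (c + (1:ℤ) • (cJ - cI))) ω)
        - (2*θs + dotw (c + (c + (-1:ℤ) • (cJ - cI))) ω) = dotw ((2:ℤ) • (cJ - cI)) ω := by
      rw [hT, hT, S6.dotw_smul, S6.dotw_sub]
      push_cast
      ring
    have h12 : distToInt (dotw ((2:ℤ) • (cJ - cI)) ω) ≤ 12*t := by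
      rw [← hdiffT]
      exact (S6.dti_sub_le _ _).trans (by linarith)
    linarith
  rcases S6.key hv hδ0 hδsm C A hvCA with hca | hca
  · -- use σ = 1
    have hb1 : distToInt (2*θs + dotw (c + (c + (1:ℤ) • (cJ - cI))) ω) ≤ 6*t := by
      have e : 2*θs + dotw (c + (c + (1:ℤ) • (cJ - cI))) ω = (A + B) + ((C - A) + (C - A)) := by
        rw [hT, hA, hB, hC]
        push_cast
        ring
      rw [e]
      calc distToInt ((A+B) + ((C-A)+(C-A)))
          ≤ distToInt (A+B) + distToInt ((C-A)+(C-A)) := S6.dti_add_le _ _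
        _ ≤ distToInt (A+B) + (distToInt (C-A) + distToInt (C-A)) := by
            linarith [S6.dti_add_le (C-A) (C-A)]
        _ ≤ 6 * t := by linarith
    refine ⟨1, ⟨Or.inl rfl, by rw [h6t]; exact hb1⟩, ?_⟩
    rintro y ⟨hy1 | hy1, hy2⟩
    · exact hy1
    · exfalso
      rw [hy1, h6t] at hy2
      exact hnotboth ⟨hb1, hy2⟩
  · -- use σ = -1
    have hb2 : distToInt (2*θs + dotw (c + (c + (-1:ℤ) • (cJ - cI))) ω) ≤ 6*t := by
      have e : 2*θs + dotw (c + (c + (-1:ℤ) • (cJ - cI))) ω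
          = ((C + A) + (C + A)) - (A + B) := by
        rw [hT, hA, hB, hC]
        push_cast
        ring
      rw [e]
      calc distToInt (((C+A) + (C+A)) - (A+B))
          ≤ distToInt ((C+A) + (C+A)) + distToInt (A+B) := S6.dti_sub_le _ _
        _ ≤ (distToInt (C+A) + distToInt (C+A)) + distToInt (A+B) := by
            linarith [S6.dti_add_le (C+A) (C+A)]
        _ ≤ 6 * t := by linarith
    refine ⟨-1, ⟨Or.inr rfl, by rw [h6t]; exact hb2⟩, ?_⟩
    rintro y ⟨hy1 | hy1, hy2⟩
    · exfalso
      rw [hy1, h6t] at hy2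
      exact hnotboth ⟨hy2, hb2⟩
    · exact hy1
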